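/- Let P ⊆ ℝ^d be a finite β-stable instance for k-means, and let {C_1,…,C_k} be a partition of P with centroids a_1,…,a_k whose k-means cost is at most (1+β/2)·OPT_k. For a set S of k centers, define the interaction number N(S) := ∑_{x∈S} |I(x)|, where I(x) is the set of clusters C_j such that cost(a_j,x) ≥ 32·Δ_j and cost(a_j,x) ≤ 16·cost(a_j,S) with Δ_j := cost(C_j,a_j)/|C_j|. Then cost(P,S) ≥ OPT_k · max(1, (1/768)·(N(S)/k − 1)·β). -/

import Mathlib

open Finset

noncomputable section

/-- `ℝ^d` as a Euclidean space. -/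
abbrev Pt (d : ℕ) := EuclideanSpace ℝ (Fin d)

/-- `cost(p,S) = min_{s ∈ S} ‖p - s‖²`. -/
noncomputable def pcost {d : ℕ} (p : Pt d) (S : Finset (Pt d)) : ℝ :=
  sInf ((fun s => ‖p - s‖ ^ 2) '' (S : Set (Pt d)))

/-- `cost(P,S) = ∑_{p ∈ P} min_{s ∈ S} ‖p - s‖²`. -/
noncomputable def scost {d : ℕ} (P S : Finset (Pt d)) : ℝ :=
  ∑ p ∈ P, pcost p S

/-- `OPT_j`: the optimal k-means cost of `P` with `j` centers. -/
noncomputable def kmOPT {d : ℕ} (P : Finset (Pt d)) (j : ℕ) : ℝ :=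
  sInf ((fun S : Finset (Pt d) => scost P S) '' {S : Finset (Pt d) | S.card = j})

lemma pcost_nonneg {d : ℕ} (p : Pt d) (S : Finset (Pt d)) : 0 ≤ pcost p S :=
  Real.sInf_nonneg (by rintro x ⟨s, _, rfl⟩; positivity)

lemma scost_nonneg {d : ℕ} (P S : Finset (Pt d)) : 0 ≤ scost P S :=
  Finset.sum_nonneg fun p _ => pcost_nonneg p S

lemma pcost_le {d : ℕ} (p : Pt d) {S : Finset (Pt d)} {s : Pt d} (hs : s ∈ S) :
    pcost p S ≤ ‖p - s‖ ^ 2 :=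
  csInf_le ⟨0, by rintro x ⟨t, _, rfl⟩; positivity⟩ ⟨s, hs, rfl⟩

lemma kmOPT_nonneg {d : ℕ} (P : Finset (Pt d)) (j : ℕ) : 0 ≤ kmOPT P j :=
  Real.sInf_nonneg (by rintro x ⟨S, _, rfl⟩; exact scost_nonneg P S)

lemma kmOPT_le {d : ℕ} (P : Finset (Pt d)) {S : Finset (Pt d)} {j : ℕ}
    (h : S.card = j) : kmOPT P j ≤ scost P S :=
  csInf_le ⟨0, by rintro x ⟨T, _, rfl⟩; exact scost_nonneg P T⟩ ⟨S, h, rfl⟩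

/-- pointwise lower bound for pcost -/
lemma pcost_ge {d : ℕ} (p : Pt d) {S : Finset (Pt d)} (hS : S.Nonempty)
    {c : ℝ} (hc : ∀ s ∈ S, c ≤ ‖p - s‖ ^ 2) : c ≤ pcost p S :=
  le_csInf (by exact ⟨_, hS.choose, hS.choose_spec, rfl⟩)
    (by rintro x ⟨s, hs, rfl⟩; exact hc s hs)

open RealInnerProductSpace in
lemma centroid_identity {d : ℕ} (C : Finset (Pt d)) (y : Pt d) :
    ∑ p ∈ C, ‖p - y‖ ^ 2
      = (∑ p ∈ C, ‖p - ((C.card : ℝ))⁻¹ • ∑ q ∈ C, q‖ ^ 2)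
        + (C.card : ℝ) * ‖((C.card : ℝ))⁻¹ • (∑ q ∈ C, q) - y‖ ^ 2 := by
  rcases C.eq_empty_or_nonempty with rfl | hC
  · simp
  set a : Pt d := ((C.card : ℝ))⁻¹ • ∑ q ∈ C, q with ha
  have hn : (C.card : ℝ) ≠ 0 := by
    simp [Finset.card_ne_zero_of_mem hC.choose_spec]
  have hsum : ∑ p ∈ C, (p - a) = 0 := by
    rw [Finset.sum_sub_distrib, Finset.sum_const, ← Nat.cast_smul_eq_nsmul ℝ, ha,
      smul_smul, mul_inv_cancel₀ hn, one_smul, sub_self]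
  have key : ∀ p : Pt d, ‖p - y‖ ^ 2 = ‖p - a‖ ^ 2 + 2 * ⟪p - a, a - y⟫ + ‖a - y‖ ^ 2 := by
    intro p
    have h : p - y = (p - a) + (a - y) := by abel
    rw [h, norm_add_sq_real]
  rw [Finset.sum_congr rfl fun p _ => key p, Finset.sum_add_distrib,
    Finset.sum_add_distrib, ← Finset.mul_sum, ← sum_inner, hsum, inner_zero_left,
    Finset.sum_const, nsmul_eq_mul]
  ring

/-- lower bound for the cost of a cluster in terms of distance of its centroid to `S` -/
lemma cluster_cost_lb {d : ℕ} {S : Finset (Pt d)} (hS : S.Nonempty)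
    (C : Finset (Pt d)) (a : Pt d) {Δ : ℝ} (hΔ0 : 0 ≤ Δ)
    (hΔ : ∑ p ∈ C, ‖p - a‖ ^ 2 ≤ (C.card : ℝ) * Δ)
    (hDΔ : Real.sqrt Δ ≤ Real.sqrt (pcost a S)) :
    (C.card : ℝ) * (Real.sqrt (pcost a S) - Real.sqrt Δ) ^ 2 ≤ ∑ p ∈ C, pcost p S := by
  set D := pcost a S with hD
  set sD := Real.sqrt D with hsD
  set sΔ := Real.sqrt Δ with hsΔ
  have hD0 : 0 ≤ D := pcost_nonneg a S
  have hsD2 : sD ^ 2 = D := Real.sq_sqrt hD0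
  have hsΔ2 : sΔ ^ 2 = Δ := Real.sq_sqrt hΔ0
  have hsΔ0 : 0 ≤ sΔ := Real.sqrt_nonneg _
  have hsD0 : 0 ≤ sD := Real.sqrt_nonneg _
  -- pointwise bound
  have hpt : ∀ p : Pt d, (D - Δ) - 2 * (sD - sΔ) * ‖p - a‖ ≤ pcost p S := by
    intro p
    apply pcost_ge p hS
    intro s hs
    have hv : sD ≤ ‖a - s‖ := by
      have h1 : D ≤ ‖a - s‖ ^ 2 := pcost_le a hs
      calc sD ≤ Real.sqrt (‖a - s‖ ^ 2) := Real.sqrt_le_sqrt h1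
        _ = ‖a - s‖ := Real.sqrt_sq (norm_nonneg _)
    have htri : ‖a - s‖ ≤ ‖p - a‖ + ‖p - s‖ := by
      have h : a - s = -(p - a) + (p - s) := by abel
      calc ‖a - s‖ = ‖-(p - a) + (p - s)‖ := by rw [h]
        _ ≤ ‖-(p - a)‖ + ‖p - s‖ := norm_add_le _ _
        _ = ‖p - a‖ + ‖p - s‖ := by rw [norm_neg]
    set u := ‖p - a‖
    set w := ‖p - s‖
    have hu0 : (0:ℝ) ≤ u := norm_nonneg _
    have hw0 : (0:ℝ) ≤ w := norm_nonneg _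
    have hw : sD - u ≤ w := by linarith
    rcases le_or_gt u sD with hc | hc
    · nlinarith [sq_nonneg (u - sΔ), mul_nonneg (sub_nonneg.2 hw) (by linarith : (0:ℝ) ≤ w + (sD - u))]
    · nlinarith [mul_nonneg (sub_nonneg.2 hDΔ) (by linarith : (0:ℝ) ≤ 2*u - sD - sΔ), sq_nonneg w]
  have hsum1 : ((C.card : ℝ) * (D - Δ)) - 2 * (sD - sΔ) * (∑ p ∈ C, ‖p - a‖)
      ≤ ∑ p ∈ C, pcost p S := by
    calc ((C.card : ℝ) * (D - Δ)) - 2 * (sD - sΔ) * (∑ p ∈ C, ‖p - a‖)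
        = ∑ p ∈ C, ((D - Δ) - 2 * (sD - sΔ) * ‖p - a‖) := by
          rw [Finset.sum_sub_distrib, Finset.sum_const, nsmul_eq_mul, ← Finset.mul_sum]
      _ ≤ ∑ p ∈ C, pcost p S := Finset.sum_le_sum fun p _ => hpt p
  -- Cauchy-Schwarz
  have hcs : ∑ p ∈ C, ‖p - a‖ ≤ (C.card : ℝ) * sΔ := by
    have h1 : (∑ p ∈ C, ‖p - a‖) ^ 2 ≤ (C.card : ℝ) * ∑ p ∈ C, ‖p - a‖ ^ 2 := by
      exact_mod_cast sq_sum_le_card_mul_sum_sq (s := C) (f := fun p => ‖p - a‖)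
    have h2 : (∑ p ∈ C, ‖p - a‖) ^ 2 ≤ ((C.card : ℝ) * sΔ) ^ 2 := by
      have h5 : (C.card : ℝ) * ∑ p ∈ C, ‖p - a‖ ^ 2 ≤ (C.card : ℝ) * ((C.card : ℝ) * Δ) :=
        mul_le_mul_of_nonneg_left hΔ (Nat.cast_nonneg _)
      have h6 : ((C.card : ℝ) * sΔ) ^ 2 = (C.card : ℝ) * ((C.card : ℝ) * Δ) := by
        rw [mul_pow, hsΔ2]; ring
      linarith
    have h3 : (0:ℝ) ≤ ∑ p ∈ C, ‖p - a‖ := Finset.sum_nonneg fun p _ => norm_nonneg _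
    have h4 : (0:ℝ) ≤ (C.card : ℝ) * sΔ := mul_nonneg (Nat.cast_nonneg _) hsΔ0
    nlinarith
  have hfac : (0:ℝ) ≤ sD - sΔ := sub_nonneg.2 hDΔ
  have : ((C.card : ℝ) * (D - Δ)) - 2 * (sD - sΔ) * ((C.card : ℝ) * sΔ)
      ≤ ∑ p ∈ C, pcost p S := by
    refine le_trans (by nlinarith [mul_nonneg (mul_nonneg (by norm_num : (0:ℝ) ≤ 2) hfac) (sub_nonneg.2 hcs)]) hsum1
  nlinarith [this]

lemma infinite_of_ne {d : ℕ} {u v : Pt d} (h : u ≠ v) : Infinite (Pt d) := by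
  have hv : v - u ≠ 0 := sub_ne_zero.2 (Ne.symm h)
  exact Infinite.of_injective (fun t : ℕ => u + (t : ℝ) • (v - u)) (by
    intro m n hmn
    have h2 : ((m : ℝ) - n) • (v - u) = 0 := by
      have := sub_eq_zero.2 hmn
      rw [sub_smul] at *
      abel_nf at this ⊢
      linear_combination (norm := module) this
    rcases smul_eq_zero.1 h2 with h3 | h3
    · exact_mod_cast sub_eq_zero.1 h3
    · exact absurd h3 hv)

lemma merge_bound {d k : ℕ} (P : Finset (Pt d)) (cl : Pt d → Fin k)
    (x : Pt d) (j j1 : Fin k) (hne : j ≠ j1) (hinf : Infinite (Pt d)) :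
    kmOPT P (k - 1) ≤
      (∑ i : Fin k, ∑ p ∈ P.filter fun q => cl q = i,
          ‖p - (((P.filter fun q => cl q = i).card : ℝ))⁻¹ •
              ∑ q ∈ P.filter fun q => cl q = i, q‖ ^ 2)
      + ((P.filter fun q => cl q = j).card : ℝ) *
          ‖(((P.filter fun q => cl q = j).card : ℝ))⁻¹ •
              (∑ q ∈ P.filter fun q => cl q = j, q) - x‖ ^ 2
      + ((P.filter fun q => cl q = j1).card : ℝ) *
          ‖(((P.filter fun q => cl q = j1).card : ℝ))⁻¹ •
              (∑ q ∈ P.filter fun q => cl q = j1, q) - x‖ ^ 2 := by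
  classical
  haveI := hinf
  set Cj : Fin k → Finset (Pt d) := fun i => P.filter fun q => cl q = i with hCj
  set a : Fin k → Pt d := fun i => (((Cj i).card : ℝ))⁻¹ • ∑ q ∈ Cj i, q with haf
  have hk2 : 2 ≤ k := by
    have h1 := j.2; have h2 := j1.2
    rcases k with _ | _ | k
    · exact absurd j.2 (by omega)
    · exact absurd (Fin.ext_iff.not.1 hne) (by omega)
    · omega
  set B : Finset (Pt d) := insert x (((Finset.univ.erase j).erase j1).image a) with hB
  have hBcard : B.card ≤ k - 1 := by
    have h1 : ((Finset.univ.erase j).erase j1).card = k - 2 := by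
      rw [Finset.card_erase_of_mem (Finset.mem_erase.2 ⟨Ne.symm hne, Finset.mem_univ _⟩),
        Finset.card_erase_of_mem (Finset.mem_univ _)]
      simp [Finset.card_univ]
      omega
    calc B.card ≤ (((Finset.univ.erase j).erase j1).image a).card + 1 :=
          Finset.card_insert_le _ _
      _ ≤ (k - 2) + 1 := by
          have := Finset.card_image_le (s := ((Finset.univ.erase j).erase j1)) (f := a)
          omega
      _ ≤ k - 1 := by omega
  obtain ⟨S', hsub, hScard⟩ := Infinite.exists_superset_card_eq B (k - 1) hBcard
  refine le_trans (kmOPT_le P hScard) ?_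
  have hfib : scost P S' = ∑ i : Fin k, ∑ p ∈ Cj i, pcost p S' := by
    rw [scost]
    exact (Finset.sum_fiberwise P cl (fun p => pcost p S')).symm
  rw [hfib]
  have hxS : x ∈ S' := hsub (Finset.mem_insert_self _ _)
  have hbound : ∀ i : Fin k, ∑ p ∈ Cj i, pcost p S' ≤
      (∑ p ∈ Cj i, ‖p - a i‖ ^ 2)
      + (if i = j then ((Cj j).card : ℝ) * ‖a j - x‖ ^ 2 else 0)
      + (if i = j1 then ((Cj j1).card : ℝ) * ‖a j1 - x‖ ^ 2 else 0) := by
    intro i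
    by_cases hij : i = j
    · subst hij
      simp only [if_pos rfl, if_neg hne]
      have : ∑ p ∈ Cj i, pcost p S' ≤ ∑ p ∈ Cj i, ‖p - x‖ ^ 2 :=
        Finset.sum_le_sum fun p _ => pcost_le p hxS
      calc ∑ p ∈ Cj i, pcost p S' ≤ ∑ p ∈ Cj i, ‖p - x‖ ^ 2 := this
        _ = (∑ p ∈ Cj i, ‖p - a i‖ ^ 2) + ((Cj i).card : ℝ) * ‖a i - x‖ ^ 2 :=
          centroid_identity (Cj i) x
        _ ≤ _ := by simp [haf]
    by_cases hij1 : i = j1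
    · subst hij1
      simp only [if_neg hij, if_pos rfl]
      have : ∑ p ∈ Cj i, pcost p S' ≤ ∑ p ∈ Cj i, ‖p - x‖ ^ 2 :=
        Finset.sum_le_sum fun p _ => pcost_le p hxS
      calc ∑ p ∈ Cj i, pcost p S' ≤ ∑ p ∈ Cj i, ‖p - x‖ ^ 2 := this
        _ = (∑ p ∈ Cj i, ‖p - a i‖ ^ 2) + ((Cj i).card : ℝ) * ‖a i - x‖ ^ 2 :=
          centroid_identity (Cj i) x
        _ ≤ _ := by simp [haf]
    · simp only [if_neg hij, if_neg hij1, add_zero]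
      have haiS : a i ∈ S' := by
        apply hsub
        exact Finset.mem_insert_of_mem (Finset.mem_image_of_mem a
          (Finset.mem_erase.2 ⟨hij1, Finset.mem_erase.2 ⟨hij, Finset.mem_univ _⟩⟩))
      exact Finset.sum_le_sum fun p _ => pcost_le p haiS
  calc ∑ i : Fin k, ∑ p ∈ Cj i, pcost p S'
      ≤ ∑ i : Fin k, ((∑ p ∈ Cj i, ‖p - a i‖ ^ 2)
        + (if i = j then ((Cj j).card : ℝ) * ‖a j - x‖ ^ 2 else 0)
        + (if i = j1 then ((Cj j1).card : ℝ) * ‖a j1 - x‖ ^ 2 else 0)) :=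
        Finset.sum_le_sum fun i _ => hbound i
    _ ≤ _ := by
        rw [Finset.sum_add_distrib, Finset.sum_add_distrib,
          Finset.sum_ite_eq' Finset.univ j, Finset.sum_ite_eq' Finset.univ j1]
        simp [haf, hCj]

set_option maxHeartbeats 2000000 in
/-- For β-stable instances, the cost of any solution `S` is lower bounded in
terms of its interaction number `N(S)`. -/
theorem stable_cost_vs_interaction_number
    {d : ℕ} (k : ℕ) (β : ℝ) (P : Finset (Pt d)) (cl : Pt d → Fin k)
    (S : Finset (Pt d))
    (hβ : 0 < β)
    (hstable : kmOPT P k * (1 + β) ≤ kmOPT P (k - 1))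
    (hS : S.card = k) :
    -- the clusters of the partition, their centroids and their average costs
    let Cj : Fin k → Finset (Pt d) := fun j => P.filter fun p => cl p = j
    let a : Fin k → Pt d := fun j => (((Cj j).card : ℝ))⁻¹ • ∑ p ∈ Cj j, p
    let Δ : Fin k → ℝ := fun j => (∑ p ∈ Cj j, ‖p - a j‖ ^ 2) / ((Cj j).card : ℝ)
    -- the clustering is a (1+β/2)-approximation
    (∑ j : Fin k, ∑ p ∈ Cj j, ‖p - a j‖ ^ 2) ≤ (1 + β / 2) * kmOPT P k →
    -- `I(x)`: the clusters interacting with `x`; `N(S) := ∑_{x ∈ S} |I(x)|`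
    let I : Pt d → Finset (Fin k) := fun x => Finset.univ.filter fun j =>
      32 * Δ j ≤ ‖a j - x‖ ^ 2 ∧ ‖a j - x‖ ^ 2 ≤ 16 * pcost (a j) S
    let N : ℝ := ∑ x ∈ S, ((I x).card : ℝ)
    kmOPT P k * max 1 ((1 / 768 : ℝ) * (N / (k : ℝ) - 1) * β) ≤ scost P S := by
  intro Cj a Δ hA I N
  have hCj : Cj = fun j => P.filter fun p => cl p = j := rfl
  have ha : a = fun j => (((Cj j).card : ℝ))⁻¹ • ∑ p ∈ Cj j, p := rfl
  have hΔr : Δ = fun j => (∑ p ∈ Cj j, ‖p - a j‖ ^ 2) / ((Cj j).card : ℝ) := rfl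
  have hIr : I = fun x => Finset.univ.filter fun j =>
      32 * Δ j ≤ ‖a j - x‖ ^ 2 ∧ ‖a j - x‖ ^ 2 ≤ 16 * pcost (a j) S := rfl
  have hNr : N = ∑ x ∈ S, ((I x).card : ℝ) := rfl
  set OPT := kmOPT P k with hOPTdef
  set Z := scost P S with hZdef
  have hOPT0 : 0 ≤ OPT := kmOPT_nonneg P k
  have hOZ : OPT ≤ Z := kmOPT_le P hS
  rcases le_total ((1 / 768 : ℝ) * (N / (k : ℝ) - 1) * β) 1 with hM | hM
  · rw [max_eq_left hM, mul_one]; exact hOZ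
  rw [max_eq_right hM]
  -- k is positive
  have hk0 : 0 < k := by
    by_contra h
    have hk : k = 0 := by omega
    rw [hk] at hM
    norm_num at hM
    nlinarith
  have hkR : (0 : ℝ) < k := by exact_mod_cast hk0
  -- cluster costs
  set Zc : Fin k → ℝ := fun j => ∑ p ∈ Cj j, pcost p S with hZc
  have hZfib : Z = ∑ j : Fin k, Zc j := by
    rw [hZdef, scost]
    exact (Finset.sum_fiberwise P cl (fun p => pcost p S)).symm
  have hZc0 : ∀ j, 0 ≤ Zc j := fun j => Finset.sum_nonneg fun p _ => pcost_nonneg p S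
  -- the per-pair bound
  have hpair : ∀ x ∈ S, ∀ j ∈ I x, ∀ j1 ∈ I x, j ≠ j1 →
      ((Cj j1).card : ℝ) * ‖a j1 - x‖ ^ 2 ≤ ((Cj j).card : ℝ) * ‖a j - x‖ ^ 2 →
      β * OPT ≤ 768 * Zc j := by
    intro x hx j hj j1 hj1 hne hmin
    have hk2 : 2 ≤ k := by
      rcases k with _ | _ | k
      · exact absurd j.2 (by omega)
      · exact absurd (Fin.ext_iff.not.1 hne) (by omega)
      · omega
    -- Pt d is infinite
    obtain ⟨u, hu, v, hv, huv⟩ := Finset.one_lt_card.1 (by omega : 1 < S.card)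
    have hinf : Infinite (Pt d) := infinite_of_ne huv
    have hSne : S.Nonempty := ⟨u, hu⟩
    -- merge bound
    have hMB : kmOPT P (k - 1) ≤
        (∑ i : Fin k, ∑ p ∈ Cj i, ‖p - a i‖ ^ 2)
        + ((Cj j).card : ℝ) * ‖a j - x‖ ^ 2
        + ((Cj j1).card : ℝ) * ‖a j1 - x‖ ^ 2 :=
      merge_bound P cl x j j1 hne hinf
    -- stability chain: β/2 * OPT ≤ 2 * key j
    have hchain : β * OPT ≤ 4 * (((Cj j).card : ℝ) * ‖a j - x‖ ^ 2) := by
      have h1 : OPT * (1 + β) ≤ kmOPT P (k - 1) := hstable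
      linarith [hA]
    -- membership facts
    have hjm : 32 * Δ j ≤ ‖a j - x‖ ^ 2 ∧ ‖a j - x‖ ^ 2 ≤ 16 * pcost (a j) S := by
      have := hj
      rw [hIr] at this
      exact (Finset.mem_filter.1 this).2
    obtain ⟨h32, h16⟩ := hjm
    -- cluster cost lower bound
    set r := ‖a j - x‖ with hr
    have hr0 : 0 ≤ r := norm_nonneg _
    set D := pcost (a j) S with hDdef
    have hD0 : 0 ≤ D := pcost_nonneg _ _
    have hΔ0 : 0 ≤ Δ j := by
      rw [hΔr]
      exact div_nonneg (Finset.sum_nonneg fun p _ => by positivity) (Nat.cast_nonneg _)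
    have hΔsum : ∑ p ∈ Cj j, ‖p - a j‖ ^ 2 ≤ ((Cj j).card : ℝ) * Δ j := by
      rcases Finset.eq_empty_or_nonempty (Cj j) with h | h
      · simp [h, hΔr]
      · have hn : ((Cj j).card : ℝ) ≠ 0 :=
          Nat.cast_ne_zero.2 (Finset.card_ne_zero_of_mem h.choose_spec)
        rw [hΔr]
        rw [mul_div_cancel₀ _ hn]
    have hsqΔ : Real.sqrt (Δ j) ≤ (20 / 113) * r := by
      have h1 : Δ j ≤ ((20 / 113) * r) ^ 2 := by nlinarith
      calc Real.sqrt (Δ j) ≤ Real.sqrt (((20 / 113) * r) ^ 2) := Real.sqrt_le_sqrt h1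
        _ = (20 / 113) * r := Real.sqrt_sq (by positivity)
    have hsqD : r / 4 ≤ Real.sqrt D := by
      have h1 : (r / 4) ^ 2 ≤ D := by nlinarith
      calc r / 4 = Real.sqrt ((r / 4) ^ 2) := (Real.sqrt_sq (by positivity)).symm
        _ ≤ Real.sqrt D := Real.sqrt_le_sqrt h1
    have hDΔ : Real.sqrt (Δ j) ≤ Real.sqrt D := by
      calc Real.sqrt (Δ j) ≤ (20 / 113) * r := hsqΔ
        _ ≤ r / 4 := by linarith
        _ ≤ Real.sqrt D := hsqD
    have hZlb : ((Cj j).card : ℝ) * (Real.sqrt D - Real.sqrt (Δ j)) ^ 2 ≤ Zc j :=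
      cluster_cost_lb hSne (Cj j) (a j) hΔ0 hΔsum hDΔ
    have hkey : ((Cj j).card : ℝ) * r ^ 2 ≤ 192 * Zc j := by
      have h1 : (33 / 452) * r ≤ Real.sqrt D - Real.sqrt (Δ j) := by linarith
      have h2 : ((33 / 452) * r) ^ 2 ≤ (Real.sqrt D - Real.sqrt (Δ j)) ^ 2 := by
        nlinarith [hr0]
      have h3 : r ^ 2 ≤ 192 * (Real.sqrt D - Real.sqrt (Δ j)) ^ 2 := by nlinarith [h2, sq_nonneg r]
      have h4 : ((Cj j).card : ℝ) * r ^ 2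
          ≤ ((Cj j).card : ℝ) * (192 * (Real.sqrt D - Real.sqrt (Δ j)) ^ 2) :=
        mul_le_mul_of_nonneg_left h3 (Nat.cast_nonneg _)
      have h5 : ((Cj j).card : ℝ) * (192 * (Real.sqrt D - Real.sqrt (Δ j)) ^ 2)
          = 192 * (((Cj j).card : ℝ) * (Real.sqrt D - Real.sqrt (Δ j)) ^ 2) := by ring
      linarith [hZlb, h4, h5]
    linarith
  -- per-center bound
  have hperx : ∀ x ∈ S, (((I x).card : ℝ) - 1) * (β * OPT) ≤ 768 * ∑ j : Fin k, Zc j := by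
    intro x hx
    have hβOPT : 0 ≤ β * OPT := mul_nonneg hβ.le hOPT0
    have hRHS : 0 ≤ 768 * ∑ j : Fin k, Zc j :=
      mul_nonneg (by norm_num) (Finset.sum_nonneg fun j _ => hZc0 j)
    rcases Finset.eq_empty_or_nonempty (I x) with he | hne
    · rw [he]
      simp only [Finset.card_empty, Nat.cast_zero]
      nlinarith
    obtain ⟨j1, hj1, hmin⟩ := Finset.exists_min_image (I x)
      (fun j => ((Cj j).card : ℝ) * ‖a j - x‖ ^ 2) hne
    have hsum : ∑ j ∈ (I x).erase j1, (β * OPT) ≤ ∑ j ∈ (I x).erase j1, 768 * Zc j :=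
      Finset.sum_le_sum fun j hj => hpair x hx j (Finset.mem_of_mem_erase hj) j1 hj1
        (Finset.ne_of_mem_erase hj) (hmin j (Finset.mem_of_mem_erase hj))
    have hcarde : ((I x).erase j1).card = (I x).card - 1 :=
      Finset.card_erase_of_mem hj1
    have hL : (((I x).card : ℝ) - 1) * (β * OPT) = ∑ j ∈ (I x).erase j1, (β * OPT) := by
      rw [Finset.sum_const, hcarde, nsmul_eq_mul]
      have h1 : (1 : ℕ) ≤ (I x).card := Finset.card_pos.2 ⟨j1, hj1⟩
      have : (((I x).card - 1 : ℕ) : ℝ) = ((I x).card : ℝ) - 1 := by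
        push_cast [h1]
        ring
      rw [this]
    have hR : ∑ j ∈ (I x).erase j1, 768 * Zc j ≤ 768 * ∑ j : Fin k, Zc j := by
      rw [← Finset.mul_sum]
      have : ∑ j ∈ (I x).erase j1, Zc j ≤ ∑ j : Fin k, Zc j :=
        Finset.sum_le_sum_of_subset_of_nonneg (Finset.subset_univ _)
          (fun j _ _ => hZc0 j)
      linarith
    linarith [hL ▸ hsum]
  -- sum over the centers
  have hKEY : (N - k) * (β * OPT) ≤ 768 * (k : ℝ) * Z := by
    have h1 : ∑ x ∈ S, ((((I x).card : ℝ) - 1) * (β * OPT))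
        ≤ ∑ x ∈ S, (768 * ∑ j : Fin k, Zc j) := Finset.sum_le_sum hperx
    have h2 : ∑ x ∈ S, ((((I x).card : ℝ) - 1) * (β * OPT)) = (N - k) * (β * OPT) := by
      rw [← Finset.sum_mul, Finset.sum_sub_distrib, Finset.sum_const, hS, hNr]
      simp
    have h3 : ∑ x ∈ S, (768 * ∑ j : Fin k, Zc j) = 768 * (k : ℝ) * Z := by
      rw [Finset.sum_const, hS, nsmul_eq_mul, hZfib]
      ring
    linarith [h2 ▸ h3 ▸ h1]
  -- conclude
  have heq : OPT * ((1 / 768 : ℝ) * (N / (k : ℝ) - 1) * β)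
      = ((N - k) * (β * OPT)) / (768 * (k : ℝ)) := by
    field_simp
  rw [heq, div_le_iff₀ (by positivity)]
  nlinarith [hKEY]
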